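/- Let r = 2^m, s = 2^n, and let y ∈ μ_{r+1} with y^{s-1} ≠ 1. Define c_0 = (y^{s+1} + 1)/(y^s + y). Then c_0 ∈ F_r (i.e., c_0^r = c_0) and G(c_0, y) = y^{s+1} + c_0 y^s + c_0^r y + 1 = 0. -/

import Mathlib

/-- For `y ∈ μ_{r+1}` with `y^{s-1} ≠ 1`, the element `c₀ = (y^{s+1}+1)/(y^s+y)`
lies in `F_r` and is a root of `G(c,y)`. -/
theorem stmt7 (m n : ℕ) (hm : 1 ≤ m) (hn : 1 ≤ n)
    (K : Type) [Field K] [Fintype K] (hcard : Fintype.card K = 2 ^ (2 * m))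
    (y : K) (hy : y ^ (2 ^ m + 1) = 1) (hy' : y ^ (2 ^ n - 1) ≠ 1) :
    let c₀ : K := (y ^ (2 ^ n + 1) + 1) / (y ^ (2 ^ n) + y)
    c₀ ^ (2 ^ m) = c₀ ∧
      y ^ (2 ^ n + 1) + c₀ * y ^ (2 ^ n) + c₀ ^ (2 ^ m) * y + 1 = 0 := by
  -- characteristic is 2
  obtain ⟨p, hp⟩ := CharP.exists K
  obtain ⟨k, hpprime, hcard'⟩ := @FiniteField.card K _ _ p hp
  have hp2 : p = 2 := by
    have hdvd : p ∣ 2 ^ (2 * m) := by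
      rw [← hcard, hcard']
      exact dvd_pow_self p k.2.ne'
    have := hpprime.dvd_of_dvd_pow hdvd
    exact (Nat.prime_dvd_prime_iff_eq hpprime Nat.prime_two).mp this
  subst hp2
  haveI : CharP K 2 := hp
  have htwo : (2 : K) = 0 := by
    have := CharP.cast_eq_zero K 2
    exact_mod_cast this
  -- y ≠ 0
  have hy0 : y ≠ 0 := by
    intro h
    rw [h, zero_pow (by positivity)] at hy
    exact zero_ne_one hy
  -- denominator nonzero
  have hs : 2 ^ n = (2 ^ n - 1) + 1 := by
    have : 1 ≤ 2 ^ n := Nat.one_le_two_pow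
    omega
  have hd : y ^ (2 ^ n) + y ≠ 0 := by
    intro h
    have h2 : y * (y ^ (2 ^ n - 1) + 1) = 0 := by
      rw [mul_add, mul_one, ← pow_succ', ← hs]
      exact h
    rcases mul_eq_zero.mp h2 with h3 | h3
    · exact hy0 h3
    · exact hy' (by linear_combination h3 - htwo)
  -- y^(2^m) = y⁻¹
  have hyr : y ^ (2 ^ m) = y⁻¹ := by
    have h1 : y * y ^ (2 ^ m) = 1 := by
      rw [← pow_succ']
      exact hy
    exact eq_inv_of_mul_eq_one_left (by linear_combination h1)
  intro c₀
  have e1 : (y ^ (2 ^ n + 1)) ^ (2 ^ m) = (y⁻¹) ^ (2 ^ n + 1) := by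
    rw [← pow_mul, mul_comm, pow_mul, hyr]
  have e2 : (y ^ (2 ^ n)) ^ (2 ^ m) = (y⁻¹) ^ (2 ^ n) := by
    rw [← pow_mul, mul_comm, pow_mul, hyr]
  have key : c₀ ^ (2 ^ m) = c₀ := by
    show ((y ^ (2 ^ n + 1) + 1) / (y ^ (2 ^ n) + y)) ^ (2 ^ m)
      = (y ^ (2 ^ n + 1) + 1) / (y ^ (2 ^ n) + y)
    rw [div_pow, add_pow_char_pow, add_pow_char_pow, one_pow, e1, e2, hyr]
    have hne : (y⁻¹) ^ (2 ^ n) + y⁻¹ ≠ 0 := by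
      intro h
      apply hd
      have hpn : y ^ (2 ^ n) ≠ 0 := pow_ne_zero _ hy0
      have expand : ((y⁻¹) ^ (2 ^ n) + y⁻¹) * (y ^ (2 ^ n) * y) = y + y ^ (2 ^ n) := by
        rw [inv_pow]
        field_simp
      rw [h, zero_mul] at expand
      linear_combination -expand
    rw [div_eq_div_iff hne hd]
    field_simp
    have ha : y * y⁻¹ = 1 := mul_inv_cancel₀ hy0
    have hb : y ^ (2 ^ n) * y⁻¹ ^ (2 ^ n) = 1 := by rw [← mul_pow, ha, one_pow]
    linear_combination (y ^ (2 ^ n) * y⁻¹ ^ (2 ^ n) + y * y⁻¹ ^ (2 ^ n)) * ha + (1 - y ^ 2) * hb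
  refine ⟨key, ?_⟩
  rw [key]
  have hc : c₀ * (y ^ (2 ^ n) + y) = y ^ (2 ^ n + 1) + 1 := div_mul_cancel₀ _ hd
  linear_combination hc + (y ^ (2 ^ n + 1) + 1) * htwo
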